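/- Suppose countably many programs indexed by k ∈ ℕ are run by a scheduler that in block j runs program k_j = log₂ A(j) for A(j) steps, where A(j) is the largest power of 2 dividing j. If program k halts after T_k steps, then the total number of steps executed by the scheduler across all programs before program k halts is at most (4 + k + log₂ n)·n·2^k, where n = ⌈T_k / 2^k⌉. -/
import Mathlib


/-- A006519: largest power of 2 dividing `j`. -/
def A (j : ℕ) : ℕ := 2 ^ (j.factorization 2)

lemma A_odd {i : ℕ} (h : Odd i) : A i = 1 := by
  unfold A
  rw [Nat.factorization_eq_zero_of_not_dvd]
  · simp
  · rintro ⟨c, hc⟩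
    obtain ⟨m, hm⟩ := h
    omega

lemma A_two_mul {m : ℕ} (hm : m ≠ 0) : A (2 * m) = 2 * A m := by
  unfold A
  rw [Nat.factorization_mul two_ne_zero hm, Finsupp.add_apply,
    Nat.Prime.factorization_self Nat.prime_two]
  simp [pow_add, pow_succ]

lemma S_rec (j : ℕ) : ∑ i ∈ Finset.Icc 1 j, A i
    = (j + 1) / 2 + 2 * ∑ i ∈ Finset.Icc 1 (j / 2), A i := by
  induction j with
  | zero => simp
  | succ j ih =>
    rw [Finset.sum_Icc_succ_top (by omega)]
    rcases Nat.even_or_odd (j + 1) with he | ho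
    · have hmod : (j + 1) % 2 = 0 := Nat.even_iff.mp he
      have h1 : (j + 1) / 2 = j / 2 + 1 := by omega
      have h2 : A (j + 1) = 2 * A (j / 2 + 1) := by
        have hr : j + 1 = 2 * (j / 2 + 1) := by omega
        rw [hr, A_two_mul (by omega)]
      rw [ih, h1, Finset.sum_Icc_succ_top (by omega : 1 ≤ j / 2 + 1), h2]
      omega
    · have hmod : (j + 1) % 2 = 1 := Nat.odd_iff.mp ho
      have h3 : (j + 1) / 2 = j / 2 := by omega
      rw [ih, A_odd ho, h3]
      omega

lemma S_bound (j : ℕ) :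
    2 * (∑ i ∈ Finset.Icc 1 j, A i) ≤ (Nat.log 2 j + 2) * j := by
  induction j using Nat.strong_induction_on with
  | _ j ih =>
    rcases Nat.lt_or_ge j 2 with h | h
    · interval_cases j <;> simp [A]
    · have ihj := ih (j / 2) (by omega)
      have hlogpos : 0 < Nat.log 2 j := Nat.log_pos one_lt_two h
      have hL : Nat.log 2 (j / 2) + 1 = Nat.log 2 j := by
        rw [Nat.log_div_base]; omega
      rw [S_rec j, ← hL]
      set s := ∑ i ∈ Finset.Icc 1 (j / 2), A i with hs
      set L' := Nat.log 2 (j / 2) with hL'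
      rcases Nat.even_or_odd j with he | ho
      · obtain ⟨m, rfl⟩ := he
        have hdiv : (m + m) / 2 = m := by omega
        have hdiv2 : (m + m + 1) / 2 = m := by omega
        rw [hdiv] at ihj
        rw [hdiv2]
        nlinarith [ihj]
      · obtain ⟨m, rfl⟩ := ho
        have hdiv : (2 * m + 1) / 2 = m := by omega
        have hdiv2 : (2 * m + 1 + 1) / 2 = m + 1 := by omega
        rw [hdiv] at ihj
        rw [hdiv2]
        nlinarith [ihj]

lemma log_pow_mul (c n : ℕ) (hn : n ≠ 0) :
    Nat.log 2 (2 ^ c * n) = c + Nat.log 2 n := by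
  induction c with
  | zero => simp
  | succ c ih =>
    have hr : 2 ^ (c + 1) * n = (2 ^ c * n) * 2 := by ring
    rw [hr, Nat.log_mul_base one_lt_two
      (Nat.mul_ne_zero (pow_ne_zero _ two_ne_zero) hn), ih]
    omega

/-- Uniform Doubling Scheduler: program `k` receives its `n`-th block of `2^k` steps
at block index `j = (2n-1)·2^k`; the total work through block `j` is `∑_{i=1}^j A i`.
If program `k` halts after `T` steps (so it halts within its `n`-th block,
`n = ⌈T/2^k⌉`), the total number of steps executed by the scheduler before program
`k` halts is at most `(4 + k + log₂ n)·n·2^k`. -/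
theorem stmt_6 (k T n j : ℕ) (hT : 1 ≤ T)
    (hn : n = ⌈(T : ℝ) / 2 ^ k⌉₊) (hj : j = (2 * n - 1) * 2 ^ k) :
    (∑ i ∈ Finset.Icc 1 j, A i) ≤ (4 + k + Nat.log 2 n) * n * 2 ^ k := by
  have hn1 : 1 ≤ n := by
    rw [hn]
    rw [Nat.one_le_ceil_iff]
    positivity
  have hjle : j ≤ 2 ^ (k + 1) * n := by
    rw [hj]
    calc (2 * n - 1) * 2 ^ k ≤ 2 * n * 2 ^ k :=
          Nat.mul_le_mul_right _ (by omega)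
      _ = 2 ^ (k + 1) * n := by ring
  have hlog : Nat.log 2 j ≤ k + 1 + Nat.log 2 n := by
    calc Nat.log 2 j ≤ Nat.log 2 (2 ^ (k + 1) * n) := Nat.log_mono_right hjle
      _ = k + 1 + Nat.log 2 n := log_pow_mul _ _ (by omega)
  have hS := S_bound j
  have key : 2 * (∑ i ∈ Finset.Icc 1 j, A i)
      ≤ 2 * ((4 + k + Nat.log 2 n) * n * 2 ^ k) := by
    calc 2 * (∑ i ∈ Finset.Icc 1 j, A i) ≤ (Nat.log 2 j + 2) * j := hS
      _ ≤ (k + 3 + Nat.log 2 n) * (2 ^ (k + 1) * n) :=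
          Nat.mul_le_mul (by omega) hjle
      _ = 2 * ((k + 3 + Nat.log 2 n) * n * 2 ^ k) := by ring
      _ ≤ 2 * ((4 + k + Nat.log 2 n) * n * 2 ^ k) := by
          apply Nat.mul_le_mul_left
          apply Nat.mul_le_mul_right
          apply Nat.mul_le_mul_right
          omega
  omega
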